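/- Let the perceptron with dynamic margin run with accuracy ε > 1/2 (ε ≤ 1): a₀ = 0, updates a_{t+1} = a_t + y_k with a_t·y_k ≤ (1−ε)‖a_t‖²/t for t ≥ 1 (condition a_0·y_k ≤ 0 at t=0), ‖y_k‖ ≤ R, and a unit vector u satisfies u·y_k ≥ γ_d > 0 for all patterns. Then the number t of updates satisfies t^{2ε} ≤ ε(3−2ε)·(R²/γ_d²)·(1 + (t^{2ε−1} − 1)/(2ε−1)); equivalently t ≤ (ε(3−2ε)/(2ε−1))·(R²/γ_d²)·(1 − 2(1−ε)·t^{1−2ε}). -/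

import Mathlib

open Real Finset

open scoped InnerProductSpace

section Helpers
variable {E : Type*} [NormedAddCommGroup E] [InnerProductSpace ℝ E]

lemma pdm_bern_neg {x q : ℝ} (hx : 0 ≤ x) (hq0 : 0 ≤ q) (hq1 : q ≤ 1) :
    1 - q * x ≤ (1 + x) ^ (-q) := by
  have h1x : (0:ℝ) < 1 + x := by linarith
  have hup : (1 + x) ^ q ≤ 1 + q * x :=
    rpow_one_add_le_one_add_mul_self (by linarith) hq0 hq1
  have hpos : (0:ℝ) < (1 + x) ^ q := rpow_pos_of_pos h1x q
  have hqx : (0:ℝ) < 1 + q * x := by positivity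
  have h2 : ((1:ℝ) + q * x)⁻¹ ≤ ((1 + x) ^ q)⁻¹ := inv_anti₀ hpos hup
  have h3 : 1 - q * x ≤ (1 + q * x)⁻¹ := by
    rw [← one_div, le_div_iff₀ hqx]; nlinarith [sq_nonneg (q*x)]
  rw [rpow_neg h1x.le]
  exact h3.trans h2

lemma pdm_taylor_rpow {ζ x : ℝ} (h0 : 0 ≤ ζ) (h1 : ζ ≤ 1) (hx : 0 ≤ x) :
    1 + ζ * x - ζ * (1 - ζ) / 2 * x ^ 2 ≤ (1 + x) ^ ζ := by
  set f : ℝ → ℝ := fun z => (1 + z) ^ ζ - ζ * z + ζ * (1 - ζ) / 2 * z ^ 2 with hf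
  have hderiv : ∀ z : ℝ, 0 ≤ z →
      HasDerivAt f (ζ * (1 + z) ^ (ζ - 1) - ζ + ζ * (1 - ζ) * z) z := by
    intro z hz
    have h1z : (0:ℝ) < 1 + z := by linarith
    have hd1 : HasDerivAt (fun w : ℝ => (1 + w) ^ ζ) (ζ * (1 + z) ^ (ζ - 1)) z := by
      have := ((hasDerivAt_id z).const_add 1).rpow_const (p := ζ) (Or.inl h1z.ne')
      simpa using this
    have hd2 : HasDerivAt (fun w : ℝ => ζ * w) ζ z := by
      simpa using (hasDerivAt_id z).const_mul ζ
    have hd3 : HasDerivAt (fun w : ℝ => ζ * (1 - ζ) / 2 * w ^ 2)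
        (ζ * (1 - ζ) / 2 * (2 * z)) z := by
      have := ((hasDerivAt_pow 2 z)).const_mul (ζ * (1 - ζ) / 2)
      simpa using this
    have := (hd1.sub hd2).add hd3
    refine this.congr_deriv ?_
    ring
  have hmono : MonotoneOn f (Set.Ici (0:ℝ)) := by
    apply monotoneOn_of_deriv_nonneg (convex_Ici 0)
    · intro z hz
      exact ((hderiv z hz).continuousAt).continuousWithinAt
    · intro z hz
      rw [interior_Ici] at hz
      exact (hderiv z (le_of_lt hz)).differentiableAt.differentiableWithinAt
    · intro z hz
      rw [interior_Ici] at hz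
      rw [(hderiv z hz.le).deriv]
      have hb : 1 - (1 - ζ) * z ≤ (1 + z) ^ (-(1 - ζ)) :=
        pdm_bern_neg hz.le (by linarith) (by linarith)
      have he : (1 + z) ^ (ζ - 1) = (1 + z) ^ (-(1 - ζ)) := by ring_nf
      rw [he]
      nlinarith [mul_le_mul_of_nonneg_left hb h0]
  have h00 : f 0 ≤ f x := hmono (le_refl (0:ℝ)) hx hx
  have hf0 : f 0 = 1 := by simp [hf]
  rw [hf0] at h00
  simp only [hf] at h00
  linarith

lemma pdm_harmonic_le_log : ∀ t : ℕ, 1 ≤ t →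
    ∑ j ∈ Finset.Icc 1 t, (1 / (j:ℝ)) ≤ 1 + Real.log t := by
  intro t ht
  induction t with
  | zero => omega
  | succ n ih =>
    rcases Nat.eq_or_lt_of_le ht with h | h
    · simp [← h]
    · have hn : 1 ≤ n := by omega
      have hs := ih hn
      rw [Finset.sum_Icc_succ_top (by omega : 1 ≤ n + 1)]
      have hnp : (0:ℝ) < n := by exact_mod_cast hn
      have hnp1 : (0:ℝ) < (n:ℝ) + 1 := by linarith
      have hlog : 1 / ((n:ℝ)+1) ≤ Real.log ((n:ℝ)+1) - Real.log n := by
        have h4 := Real.log_le_sub_one_of_pos (show (0:ℝ) < (n:ℝ)/((n:ℝ)+1) by positivity)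
        rw [Real.log_div hnp.ne' hnp1.ne'] at h4
        have hx : (n:ℝ)/((n:ℝ)+1) - 1 = -(1/((n:ℝ)+1)) := by field_simp; ring
        rw [hx] at h4
        linarith
      push_cast
      linarith

lemma pdm_sum_rpow_le {ζ : ℝ} (h0 : 0 ≤ ζ) (h1 : ζ < 1) : ∀ t : ℕ, 1 ≤ t →
    ∑ j ∈ Finset.Icc 1 t, ((j:ℝ)) ^ (-ζ) ≤ 1 + (((t:ℝ)) ^ (1 - ζ) - 1) / (1 - ζ) := by
  intro t ht
  induction t with
  | zero => omega
  | succ n ih =>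
    rcases Nat.eq_or_lt_of_le ht with h | h
    · simp [← h]
    · have hn : 1 ≤ n := by omega
      have hs := ih hn
      rw [Finset.sum_Icc_succ_top (by omega : 1 ≤ n + 1)]
      have hnp : (0:ℝ) < n := by exact_mod_cast hn
      have hnp1 : (0:ℝ) < (n:ℝ) + 1 := by linarith
      have hinv1 : 1/((n:ℝ)+1) ≤ 1 := by rw [div_le_one hnp1]; linarith
      have hz : (0:ℝ) < 1 - ζ := by linarith
      have key : (1 - ζ) * ((n:ℝ)+1) ^ (-ζ) ≤ ((n:ℝ)+1) ^ (1-ζ) - (n:ℝ) ^ (1-ζ) := by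
        have hb : ((1:ℝ) + (-(1/((n:ℝ)+1)))) ^ (1-ζ) ≤ 1 + (1-ζ) * (-(1/((n:ℝ)+1))) :=
          rpow_one_add_le_one_add_mul_self (by linarith) (by linarith) (by linarith)
        have hmul : (n:ℝ) ^ (1-ζ) =
            ((n:ℝ)+1) ^ (1-ζ) * (1 + (-(1/((n:ℝ)+1)))) ^ (1-ζ) := by
          rw [← Real.mul_rpow hnp1.le (by linarith)]
          congr 1
          field_simp
          ring
        have hexp : ((n:ℝ)+1) ^ (1-ζ) * (1/((n:ℝ)+1)) = ((n:ℝ)+1) ^ (-ζ) := by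
          rw [one_div, ← Real.rpow_neg_one ((n:ℝ)+1), ← Real.rpow_add hnp1]
          congr 1; ring
        have hp1 : (0:ℝ) < ((n:ℝ)+1) ^ (1-ζ) := rpow_pos_of_pos hnp1 _
        have hc := mul_le_mul_of_nonneg_left hb hp1.le
        calc (1 - ζ) * ((n:ℝ)+1) ^ (-ζ)
            = ((n:ℝ)+1) ^ (1-ζ) * ((1-ζ) * (1/((n:ℝ)+1))) := by
              rw [← hexp]; ring
          _ ≤ ((n:ℝ)+1) ^ (1-ζ) - (n:ℝ) ^ (1-ζ) := by
              rw [hmul]; nlinarith [hc]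
      have h2 : ((n:ℝ)+1)^(-ζ) ≤ (((n:ℝ)+1) ^ (1-ζ) - (n:ℝ) ^ (1-ζ))/(1-ζ) := by
        rw [le_div_iff₀ hz]; linarith
      have e1 : (((n:ℝ)+1) ^ (1-ζ) - 1)/(1-ζ)
          = ((n:ℝ) ^ (1-ζ) - 1)/(1-ζ) + (((n:ℝ)+1) ^ (1-ζ) - (n:ℝ) ^ (1-ζ))/(1-ζ) := by
        field_simp
        ring
      push_cast
      rw [e1]
      linarith

lemma pdm_nine_eighth {t : ℕ} (ht : 2 ≤ t) : (9/8:ℝ) * (1 + Real.log t) ≤ t := by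
  have h2 : (2:ℝ) ≤ t := by exact_mod_cast ht
  have hpos : (0:ℝ) < t := by linarith
  have hlog : Real.log t ≤ Real.log 2 + ((t:ℝ)/2 - 1) := by
    have := Real.log_le_sub_one_of_pos (show (0:ℝ) < (t:ℝ)/2 by linarith)
    have e : Real.log ((t:ℝ)/2) = Real.log t - Real.log 2 :=
      Real.log_div hpos.ne' two_ne_zero
    rw [e] at this; linarith
  have h22 := Real.log_two_lt_d9
  linarith

lemma pdm_sum_mul_rpow {ζ : ℝ} (h1 : ζ ≤ 1) (t : ℕ) (ht : 1 ≤ t) :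
    (∑ j ∈ Finset.Icc 1 t, ((j:ℝ)) ^ (-ζ)) * (t:ℝ) ^ ζ ≤ (t:ℝ) * (1 + Real.log t) := by
  have htp : (0:ℝ) < t := by exact_mod_cast Nat.lt_of_lt_of_le Nat.zero_lt_one ht
  rw [Finset.sum_mul]
  have hterm : ∀ j ∈ Finset.Icc 1 t, ((j:ℝ)) ^ (-ζ) * (t:ℝ) ^ ζ ≤ (t:ℝ) * (1/(j:ℝ)) := by
    intro j hj
    rw [Finset.mem_Icc] at hj
    have hjp : (0:ℝ) < j := by exact_mod_cast Nat.lt_of_lt_of_le Nat.zero_lt_one hj.1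
    have hjt : (j:ℝ) ≤ t := by exact_mod_cast hj.2
    have e1 : ((j:ℝ)) ^ (-ζ) * (t:ℝ) ^ ζ = ((t:ℝ)/(j:ℝ)) ^ ζ := by
      rw [Real.div_rpow htp.le hjp.le, Real.rpow_neg hjp.le]
      ring
    rw [e1]
    have hge1 : (1:ℝ) ≤ (t:ℝ)/(j:ℝ) := by rw [le_div_iff₀ hjp]; linarith
    calc ((t:ℝ)/(j:ℝ)) ^ ζ ≤ ((t:ℝ)/(j:ℝ)) ^ (1:ℝ) :=
          Real.rpow_le_rpow_of_exponent_le hge1 h1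
      _ = (t:ℝ) * (1/(j:ℝ)) := by rw [Real.rpow_one]; ring
  calc (∑ j ∈ Finset.Icc 1 t, ((j:ℝ)) ^ (-ζ) * (t:ℝ) ^ ζ)
      ≤ ∑ j ∈ Finset.Icc 1 t, (t:ℝ) * (1/(j:ℝ)) := Finset.sum_le_sum hterm
    _ = (t:ℝ) * ∑ j ∈ Finset.Icc 1 t, (1/(j:ℝ)) := by rw [Finset.mul_sum]
    _ ≤ (t:ℝ) * (1 + Real.log t) := by
        apply mul_le_mul_of_nonneg_left _ htp.le
        exact pdm_harmonic_le_log t ht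

end Helpers

set_option maxHeartbeats 2000000 in
theorem pdm_bound_large_eps
    {E : Type*} [NormedAddCommGroup E] [InnerProductSpace ℝ E]
    {m : ℕ} (y : Fin m → E) (a : ℕ → E) (k : ℕ → Fin m) (u : E)
    (R γd ε : ℝ)
    (ha0 : a 0 = 0)
    (hupd : ∀ t : ℕ, a (t + 1) = a t + y (k t))
    (hmis0 : ⟪a 0, y (k 0)⟫_ℝ ≤ 0)
    (hmis : ∀ t : ℕ, 1 ≤ t → ⟪a t, y (k t)⟫_ℝ ≤ (1 - ε) * ‖a t‖ ^ 2 / t)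
    (hR : ∀ j, ‖y j‖ ≤ R)
    (hu : ‖u‖ = 1)
    (hγ : γd > 0)
    (hmargin : ∀ j, ⟪u, y j⟫_ℝ ≥ γd)
    (hε : 1 / 2 < ε) (hε1 : ε ≤ 1) :
    ∀ t : ℕ, 1 ≤ t →
      ((t : ℝ) ^ (2 * ε) ≤ ε * (3 - 2 * ε) * (R ^ 2 / γd ^ 2) *
        (1 + ((t : ℝ) ^ (2 * ε - 1) - 1) / (2 * ε - 1))) ∧
      ((t : ℝ) ≤ (ε * (3 - 2 * ε) / (2 * ε - 1)) * (R ^ 2 / γd ^ 2) *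
        (1 - 2 * (1 - ε) * (t : ℝ) ^ (1 - 2 * ε))) := by
  obtain ⟨ζ, hζdef⟩ : ∃ z : ℝ, z = 2 * (1 - ε) := ⟨_, rfl⟩
  obtain ⟨d, hddef⟩ : ∃ z : ℝ, z = ζ * (1 - ζ) / 2 := ⟨_, rfl⟩
  have hζ0 : 0 ≤ ζ := by rw [hζdef]; linarith
  have hζ1 : ζ < 1 := by rw [hζdef]; linarith
  have hd0 : 0 ≤ d := by rw [hddef]; nlinarith
  have hd8 : d ≤ 1/8 := by rw [hddef]; nlinarith [sq_nonneg (1 - 2*ζ)]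
  -- R is positive
  have hR0 : 0 < R := by
    have h1 := hmargin (k 0)
    have h2 := real_inner_le_norm u (y (k 0))
    have h3 := hR (k 0)
    rw [hu, one_mul] at h2
    linarith
  -- margin growth
  have hinner : ∀ t : ℕ, γd * t ≤ ⟪u, a t⟫_ℝ := by
    intro t
    induction t with
    | zero => simp [ha0]
    | succ n ih =>
      rw [hupd n, inner_add_right]
      have := hmargin (k n)
      push_cast
      linarith
  have hna : ∀ t : ℕ, γd * t ≤ ‖a t‖ := by
    intro t
    have h1 := real_inner_le_norm u (a t)
    rw [hu, one_mul] at h1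
    exact (hinner t).trans h1
  -- recursion
  have hrec : ∀ t : ℕ, 1 ≤ t →
      ‖a (t + 1)‖ ^ 2 ≤ ‖a t‖ ^ 2 * (1 + ζ / t) + R ^ 2 := by
    intro t ht
    have htp : (0:ℝ) < t := by exact_mod_cast Nat.lt_of_lt_of_le Nat.zero_lt_one ht
    have hsq : ‖a (t+1)‖ ^ 2 = ‖a t‖ ^ 2 + 2 * ⟪a t, y (k t)⟫_ℝ + ‖y (k t)‖ ^ 2 := by
      rw [hupd t]
      exact norm_add_sq_real (a t) (y (k t))
    have hy2 : ‖y (k t)‖ ^ 2 ≤ R ^ 2 := by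
      have := hR (k t)
      nlinarith [norm_nonneg (y (k t))]
    have hip := hmis t ht
    have he : (1 - ε) = ζ / 2 := by simp only [hζdef]; ring
    rw [hsq]
    rw [he] at hip
    have : 2 * ⟪a t, y (k t)⟫_ℝ ≤ ‖a t‖ ^ 2 * (ζ / t) := by
      rw [div_mul_eq_mul_div, div_div] at hip
      have h2 : 2 * ⟪a t, y (k t)⟫_ℝ ≤ 2 * (ζ * ‖a t‖ ^ 2 / (2 * t)) := by linarith
      calc 2 * ⟪a t, y (k t)⟫_ℝ ≤ 2 * (ζ * ‖a t‖ ^ 2 / (2 * t)) := h2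
        _ = ‖a t‖ ^ 2 * (ζ / t) := by field_simp
    nlinarith [this]
  have hb1 : ‖a 1‖ ^ 2 ≤ R ^ 2 := by
    have : a 1 = y (k 0) := by rw [show (1:ℕ) = 0 + 1 from rfl, hupd 0, ha0, zero_add]
    rw [this]
    have := hR (k 0)
    nlinarith [norm_nonneg (y (k 0))]
  -- the partial sums
  obtain ⟨S, hSdef⟩ : ∃ f : ℕ → ℝ, f = fun n : ℕ => ∑ j ∈ Finset.Icc 1 n, ((j:ℝ)) ^ (-ζ) := ⟨_, rfl⟩
  have hS1 : S 1 = 1 := by rw [hSdef]; simp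
  have hSnonneg : ∀ n : ℕ, 0 ≤ S n := by
    intro n
    rw [hSdef]
    apply Finset.sum_nonneg
    intro j hj
    positivity
  have hSsucc : ∀ n : ℕ, 1 ≤ n → S (n + 1) = S n + (((n:ℝ)) + 1) ^ (-ζ) := by
    intro n hn
    rw [hSdef]
    simp only
    rw [Finset.sum_Icc_succ_top (by omega : 1 ≤ n + 1)]
    push_cast
    ring
  -- the invariant
  have hinv : ∀ t : ℕ, 1 ≤ t → ‖a t‖ ^ 2 ≤ (1 + d) * R ^ 2 * ((t:ℝ) ^ ζ * S t) := by
    intro t ht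
    induction t with
    | zero => omega
    | succ n ih =>
      rcases Nat.eq_or_lt_of_le ht with h | h
      · -- base case t = 1
        rw [← h]
        push_cast
        rw [hS1]
        simp only [Real.one_rpow]
        nlinarith [hb1, sq_nonneg R]
      · have hn : 1 ≤ n := by omega
        have hnp : (0:ℝ) < n := by exact_mod_cast hn
        have hcast : ((n+1:ℕ):ℝ) = (n:ℝ) + 1 := by push_cast; ring
        rw [hcast, hSsucc n hn]
        have hppow : (0:ℝ) < ((n:ℝ)+1) ^ ζ := rpow_pos_of_pos (by linarith) ζ
        have hcancel : ((n:ℝ)+1) ^ ζ * ((n:ℝ)+1) ^ (-ζ) = 1 := by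
          rw [← Real.rpow_add (by linarith)]
          simp
        have hrn := hrec n hn
        rcases Nat.eq_or_lt_of_le hn with h1 | h1
        · -- n = 1 : special case
          rw [← h1] at hrn ⊢
          push_cast at hrn ⊢
          rw [hS1]
          have hb2 : ‖a (1+1)‖ ^ 2 ≤ R ^ 2 * (2 + ζ) := by nlinarith [hb1, hrn]
          -- 2^ζ lower bound
          have hone : (2:ℝ) ^ (1-ζ) ≤ 2 - ζ := by
            have := rpow_one_add_le_one_add_mul_self (s := 1) (by norm_num)
              (by linarith : (0:ℝ) ≤ 1 - ζ) (by linarith : (1:ℝ) - ζ ≤ 1)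
            norm_num at this
            linarith
          have hmul2 : (2:ℝ) ^ ζ * (2:ℝ) ^ (1-ζ) = 2 := by
            rw [← Real.rpow_add (by norm_num)]
            norm_num
          have hXpos : (0:ℝ) < (2:ℝ) ^ ζ := rpow_pos_of_pos (by norm_num) ζ
          have hX : 2 ≤ (2:ℝ) ^ ζ * (2 - ζ) := by
            calc (2:ℝ) = (2:ℝ) ^ ζ * (2:ℝ) ^ (1-ζ) := hmul2.symm
              _ ≤ (2:ℝ) ^ ζ * (2 - ζ) := by
                  apply mul_le_mul_of_nonneg_left hone hXpos.le
          have hcanc2 : (2:ℝ) ^ ζ * (2:ℝ) ^ (-ζ) = 1 := by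
            rw [← Real.rpow_add (by norm_num)]
            simp
          have hkey : (2 + ζ) ≤ (1 + d) * ((2:ℝ) ^ ζ + 1) := by
            nlinarith [hX, mul_nonneg hd0 (by linarith : (0:ℝ) ≤ 2 - ζ),
              mul_nonneg (mul_nonneg hd0 hζ0) (by linarith : (0:ℝ) ≤ 1 - ζ)]
          have hexpand : (1 + d) * R ^ 2 * ((1+1:ℝ) ^ ζ * (1 + ((1:ℝ)+1) ^ (-ζ)))
              = (1 + d) * R ^ 2 * ((2:ℝ) ^ ζ + 1) := by
            have e2 : ((1:ℝ)+1) = (2:ℝ) := by norm_num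
            rw [e2]
            have e5 : (2:ℝ) ^ ζ * (1 + (2:ℝ) ^ (-ζ)) = (2:ℝ) ^ ζ + 1 := by
              rw [mul_add, mul_one, hcanc2]
            rw [e5]
          rw [hexpand]
          calc ‖a (1+1)‖ ^ 2 ≤ R ^ 2 * (2 + ζ) := hb2
            _ ≤ R ^ 2 * ((1 + d) * ((2:ℝ) ^ ζ + 1)) := by
                apply mul_le_mul_of_nonneg_left hkey (by positivity)
            _ = (1 + d) * R ^ 2 * ((2:ℝ) ^ ζ + 1) := by ring
        · -- n ≥ 2
          have hn2 : 2 ≤ n := h1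
          have ih' := ih hn
          have hfac : 0 ≤ 1 + ζ / (n:ℝ) := by positivity
          have step1 : ‖a (n+1)‖ ^ 2 ≤
              (1 + d) * R ^ 2 * ((n:ℝ) ^ ζ * S n) * (1 + ζ / n) + R ^ 2 := by
            nlinarith [mul_le_mul_of_nonneg_right ih' hfac]
          -- Taylor bound : n^ζ * (1 + ζ/n) ≤ (n+1)^ζ + d * n^ζ / n^2
          have htay : (n:ℝ) ^ ζ * (1 + ζ / n) ≤ ((n:ℝ)+1) ^ ζ + d * (n:ℝ) ^ ζ / (n:ℝ)^2 := by
            have hx : (0:ℝ) ≤ 1 / (n:ℝ) := by positivity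
            have h5 := pdm_taylor_rpow hζ0 hζ1.le hx
            have hsplit : ((n:ℝ)+1) ^ ζ = (n:ℝ) ^ ζ * (1 + 1/(n:ℝ)) ^ ζ := by
              rw [← Real.mul_rpow hnp.le (by positivity)]
              congr 1
              field_simp
            have hnpow : (0:ℝ) < (n:ℝ) ^ ζ := rpow_pos_of_pos hnp ζ
            have h6 := mul_le_mul_of_nonneg_left h5 hnpow.le
            rw [← hsplit] at h6
            have e3 : (n:ℝ) ^ ζ * (1 + ζ * (1/(n:ℝ)) - ζ * (1 - ζ)/2 * (1/(n:ℝ))^2)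
                = (n:ℝ) ^ ζ * (1 + ζ/(n:ℝ)) - d * (n:ℝ) ^ ζ / (n:ℝ)^2 := by
              rw [hddef]
              field_simp
            rw [e3] at h6
            linarith
          -- the crucial smallness bound
          have hsmall : (1 + d) * (S n * ((n:ℝ) ^ ζ / (n:ℝ)^2)) ≤ 1 := by
            have hsm : S n * (n:ℝ) ^ ζ ≤ (n:ℝ) * (1 + Real.log n) := by
              rw [hSdef]
              exact pdm_sum_mul_rpow hζ1.le n hn
            have hlogpos : 0 ≤ Real.log n := by
              apply Real.log_nonneg
              exact_mod_cast hn
            have h98 := pdm_nine_eighth hn2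
            have hnpow : (0:ℝ) < (n:ℝ) ^ ζ := rpow_pos_of_pos hnp ζ
            have hSp := hSnonneg n
            have hq : S n * (n:ℝ) ^ ζ ≤ (n:ℝ) * (1 + Real.log n) := hsm
            have hd9 : 1 + d ≤ 9/8 := by linarith
            have hstep : (1 + d) * (S n * (n:ℝ) ^ ζ) ≤ (n:ℝ)^2 := by
              calc (1 + d) * (S n * (n:ℝ) ^ ζ) ≤ (9/8) * ((n:ℝ) * (1 + Real.log n)) := by
                    apply mul_le_mul hd9 hq (mul_nonneg hSp hnpow.le) (by norm_num)
                _ = (n:ℝ) * ((9/8) * (1 + Real.log n)) := by ring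
                _ ≤ (n:ℝ) * (n:ℝ) := by
                    apply mul_le_mul_of_nonneg_left h98 hnp.le
                _ = (n:ℝ)^2 := by ring
            calc (1 + d) * (S n * ((n:ℝ) ^ ζ / (n:ℝ)^2))
                = ((1 + d) * (S n * (n:ℝ) ^ ζ)) / (n:ℝ)^2 := by ring
              _ ≤ 1 := by
                  rw [div_le_one (by positivity)]
                  exact hstep
          -- combine
          have htarget : (1 + d) * R ^ 2 * ((n:ℝ) ^ ζ * S n) * (1 + ζ / n) + R ^ 2 ≤
              (1 + d) * R ^ 2 * (((n:ℝ)+1) ^ ζ * (S n + ((n:ℝ)+1) ^ (-ζ))) := by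
            have hSp := hSnonneg n
            have hR2 : (0:ℝ) ≤ R ^ 2 := by positivity
            have hcd : (0:ℝ) ≤ (1 + d) * R ^ 2 := by positivity
            have e4 : (1 + d) * R ^ 2 * (((n:ℝ)+1) ^ ζ * (S n + ((n:ℝ)+1) ^ (-ζ)))
                = (1 + d) * R ^ 2 * (((n:ℝ)+1) ^ ζ * S n) + (1 + d) * R ^ 2 := by
              have : ((n:ℝ)+1) ^ ζ * (S n + ((n:ℝ)+1) ^ (-ζ))
                  = ((n:ℝ)+1) ^ ζ * S n + 1 := by
                rw [mul_add, hcancel]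
              rw [this]
              ring
            rw [e4]
            have h7 : (1 + d) * R ^ 2 * ((n:ℝ) ^ ζ * S n) * (1 + ζ / n)
                ≤ (1 + d) * R ^ 2 * ((((n:ℝ)+1) ^ ζ + d * (n:ℝ) ^ ζ / (n:ℝ)^2) * S n) := by
              have := mul_le_mul_of_nonneg_right htay hSp
              calc (1 + d) * R ^ 2 * ((n:ℝ) ^ ζ * S n) * (1 + ζ / n)
                  = (1 + d) * R ^ 2 * (((n:ℝ) ^ ζ * (1 + ζ / n)) * S n) := by ring
                _ ≤ (1 + d) * R ^ 2 * ((((n:ℝ)+1) ^ ζ + d * (n:ℝ) ^ ζ / (n:ℝ)^2) * S n) := by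
                    apply mul_le_mul_of_nonneg_left _ hcd
                    exact this
            have h8 : (1 + d) * R ^ 2 * ((d * (n:ℝ) ^ ζ / (n:ℝ)^2) * S n) ≤ d * R ^ 2 := by
              have h9 : (1 + d) * ((d * (n:ℝ) ^ ζ / (n:ℝ)^2) * S n) ≤ d := by
                have h10 := mul_le_mul_of_nonneg_left hsmall hd0
                calc (1 + d) * ((d * (n:ℝ) ^ ζ / (n:ℝ)^2) * S n)
                    = d * ((1 + d) * (S n * ((n:ℝ) ^ ζ / (n:ℝ)^2))) := by ring
                  _ ≤ d * 1 := h10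
                  _ = d := by ring
              calc (1 + d) * R ^ 2 * ((d * (n:ℝ) ^ ζ / (n:ℝ)^2) * S n)
                  = ((1 + d) * ((d * (n:ℝ) ^ ζ / (n:ℝ)^2) * S n)) * R ^ 2 := by ring
                _ ≤ d * R ^ 2 := by
                    apply mul_le_mul_of_nonneg_right h9 hR2
            nlinarith [h7, h8]
          exact le_trans step1 htarget
  -- final assembly
  intro t ht
  have htp : (0:ℝ) < t := by exact_mod_cast Nat.lt_of_lt_of_le Nat.zero_lt_one ht
  have ht1 : (1:ℝ) ≤ t := by exact_mod_cast ht
  have hbt := hinv t ht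
  have hmt := hna t
  have hγt : 0 ≤ γd * t := mul_nonneg hγ.le htp.le
  have hsq : γd^2 * (t:ℝ)^2 ≤ ‖a t‖^2 := by nlinarith [hmt, hγt]
  have hSb : S t ≤ 1 + ((t:ℝ)^(1-ζ) - 1)/(1-ζ) := by
    rw [hSdef]
    exact pdm_sum_rpow_le hζ0 hζ1 t ht
  have hpζ : 0 < (t:ℝ)^ζ := rpow_pos_of_pos htp ζ
  have hchain : γd^2 * (t:ℝ)^2 ≤
      (1+d) * R^2 * ((t:ℝ)^ζ * (1 + ((t:ℝ)^(1-ζ)-1)/(1-ζ))) := by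
    refine hsq.trans (hbt.trans ?_)
    apply mul_le_mul_of_nonneg_left _ (by positivity)
    exact mul_le_mul_of_nonneg_left hSb hpζ.le
  have hfirst : (t:ℝ)^((2:ℝ)-ζ) ≤ (1+d) * (R^2/γd^2) * (1 + ((t:ℝ)^(1-ζ)-1)/(1-ζ)) := by
    have hpos : (0:ℝ) < γd^2 * (t:ℝ)^ζ := by positivity
    rw [← mul_le_mul_iff_of_pos_right hpos]
    have e1 : (t:ℝ)^((2:ℝ)-ζ) * (γd^2 * (t:ℝ)^ζ) = γd^2 * (t:ℝ)^2 := by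
      have e1a : (t:ℝ)^((2:ℝ)-ζ) * (t:ℝ)^ζ = (t:ℝ)^(2:ℝ) := by
        rw [← Real.rpow_add htp]
        congr 1
        ring
      have e1b : (t:ℝ)^(2:ℝ) = (t:ℝ)^(2:ℕ) := by
        rw [← Real.rpow_natCast (t:ℝ) 2]
        norm_num
      calc (t:ℝ)^((2:ℝ)-ζ) * (γd^2 * (t:ℝ)^ζ) = γd^2 * ((t:ℝ)^((2:ℝ)-ζ) * (t:ℝ)^ζ) := by ring
        _ = γd^2 * (t:ℝ)^(2:ℕ) := by rw [e1a, e1b]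
    have e2 : (1+d) * (R^2/γd^2) * (1 + ((t:ℝ)^(1-ζ)-1)/(1-ζ)) * (γd^2 * (t:ℝ)^ζ)
        = (1+d) * R^2 * ((t:ℝ)^ζ * (1 + ((t:ℝ)^(1-ζ)-1)/(1-ζ))) := by
      field_simp
    rw [e1, e2]
    exact hchain
  have hε3 : ε * (3 - 2*ε) = 1 + d := by rw [hddef, hζdef]; ring
  have e3 : 2*ε - 1 = 1 - ζ := by rw [hζdef]; ring
  have e2 : 2*ε = (2:ℝ) - ζ := by rw [hζdef]; ring
  constructor
  · rw [hε3, e3, e2]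
    exact hfirst
  · obtain ⟨X, hXdef⟩ : ∃ z : ℝ, z = (t:ℝ)^(ζ-1) := ⟨_, rfl⟩
    have hXpos : 0 < X := by rw [hXdef]; exact rpow_pos_of_pos htp _
    have hXmul : (t:ℝ)^(1-ζ) * X = 1 := by
      rw [hXdef, ← Real.rpow_add htp]
      norm_num
    have htmul : (t:ℝ)^((2:ℝ)-ζ) * X = t := by
      rw [hXdef, ← Real.rpow_add htp]
      norm_num
    have h1ζ : (0:ℝ) < 1 - ζ := by linarith
    have hmulX := mul_le_mul_of_nonneg_right hfirst hXpos.le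
    rw [htmul] at hmulX
    have eB : (1+d) * (R^2/γd^2) * (1 + ((t:ℝ)^(1-ζ)-1)/(1-ζ)) * X
        = ((1+d)/(1-ζ)) * (R^2/γd^2) * (1 - ζ*X) := by
      have hT : (t:ℝ)^(1-ζ) = X⁻¹ := by
        field_simp at hXmul ⊢
        linarith [hXmul]
      rw [hT]
      field_simp
      ring
    rw [eB] at hmulX
    have e4 : 1 - 2*ε = ζ - 1 := by rw [hζdef]; ring
    rw [hε3, e3, e4, ← hXdef]
    calc (t:ℝ) ≤ ((1+d)/(1-ζ)) * (R^2/γd^2) * (1 - ζ*X) := hmulX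
      _ = ((1+d)/(1-ζ)) * (R^2/γd^2) * (1 - 2*(1-ε)*X) := by rw [← hζdef]
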